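/- Let A = ⋃_{k=0}^∞ ((2^{2k}, 2^{2k+1}] ∩ ℕ) and α > -1. Then the lower α-density of A equals 1/(2^{α+1}+1) and the upper α-density of A equals 2^{α+1}/(2^{α+1}+1). -/

import Mathlib

open Filter Finset Topology

private def Aset : Set ℕ := {m | ∃ k : ℕ, 2 ^ (2 * k) < m ∧ m ≤ 2 ^ (2 * k + 1)}

private noncomputable def Nf (α : ℝ) (n : ℕ) : ℝ := ∑ k ∈ Finset.Ioc 0 n, (k : ℝ) ^ α

private noncomputable def Ff (α : ℝ) (n : ℕ) : ℝ :=
  ∑ k ∈ Finset.Ioc 0 n, Aset.indicator (fun k => (k : ℝ) ^ α) k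

private lemma icc_eq_ioc (n : ℕ) : Finset.Icc 1 n = Finset.Ioc 0 n := by
  ext k; simp [Nat.lt_iff_add_one_le]

private lemma Nf_pos (α : ℝ) {n : ℕ} (hn : 1 ≤ n) : 0 < Nf α n := by
  apply Finset.sum_pos
  · intro k hk
    simp only [Finset.mem_Ioc] at hk
    exact Real.rpow_pos_of_pos (by exact_mod_cast hk.1) _
  · exact ⟨1, by simp [hn]⟩

private lemma Nf_diff (α : ℝ) {a b : ℕ} (h : a ≤ b) :
    Nf α b = Nf α a + ∑ k ∈ Finset.Ioc a b, (k : ℝ) ^ α := by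
  have hd : Disjoint (Finset.Ioc 0 a) (Finset.Ioc a b) := by
    rw [Finset.disjoint_left]; intro x hx hx'
    simp only [Finset.mem_Ioc] at hx hx'; omega
  rw [Nf, Nf, ← Finset.sum_union hd, Finset.Ioc_union_Ioc_eq_Ioc (Nat.zero_le a) h]

private lemma Ff_diff (α : ℝ) {a b : ℕ} (h : a ≤ b) :
    Ff α b = Ff α a + ∑ k ∈ Finset.Ioc a b, Aset.indicator (fun k => (k : ℝ) ^ α) k := by
  have hd : Disjoint (Finset.Ioc 0 a) (Finset.Ioc a b) := by
    rw [Finset.disjoint_left]; intro x hx hx'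
    simp only [Finset.mem_Ioc] at hx hx'; omega
  rw [Ff, Ff, ← Finset.sum_union hd, Finset.Ioc_union_Ioc_eq_Ioc (Nat.zero_le a) h]

private lemma ind_nonneg (α : ℝ) (k : ℕ) :
    0 ≤ Aset.indicator (fun k => (k : ℝ) ^ α) k :=
  Set.indicator_nonneg (fun k _ => Real.rpow_nonneg (Nat.cast_nonneg k) α) k

private lemma ind_le (α : ℝ) {k : ℕ} (hk : 0 < k) :
    Aset.indicator (fun k => (k : ℝ) ^ α) k ≤ (k : ℝ) ^ α :=
  Set.indicator_le_self' (fun k _ => Real.rpow_nonneg (Nat.cast_nonneg k) α) k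

private lemma Ff_nonneg (α : ℝ) (n : ℕ) : 0 ≤ Ff α n :=
  Finset.sum_nonneg fun k _ => ind_nonneg α k

private lemma Ff_le_Nf (α : ℝ) (n : ℕ) : Ff α n ≤ Nf α n :=
  Finset.sum_le_sum fun k hk => ind_le α (Finset.mem_Ioc.1 hk).1

private lemma ind_block (α : ℝ) {j k : ℕ} (h1 : 2 ^ (2 * j) < k) (h2 : k ≤ 2 ^ (2 * j + 1)) :
    Aset.indicator (fun k => (k : ℝ) ^ α) k = (k : ℝ) ^ α := by
  have : k ∈ Aset := ⟨j, h1, h2⟩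
  exact Set.indicator_of_mem this _

private lemma ind_gap (α : ℝ) {j k : ℕ} (h1 : 2 ^ (2 * j + 1) < k) (h2 : k ≤ 2 ^ (2 * j + 2)) :
    Aset.indicator (fun k => (k : ℝ) ^ α) k = 0 := by
  apply Set.indicator_of_notMem
  rintro ⟨i, hi1, hi2⟩
  rcases le_or_gt i j with h | h
  · have : (2:ℕ) ^ (2 * i + 1) ≤ 2 ^ (2 * j + 1) := Nat.pow_le_pow_right (by norm_num) (by omega)
    omega
  · have : (2:ℕ) ^ (2 * j + 2) ≤ 2 ^ (2 * i) := Nat.pow_le_pow_right (by norm_num) (by omega)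
    omega

private lemma sum_Ico_succ_eq (g : ℕ → ℝ) (a b : ℕ) :
    ∑ i ∈ Finset.Ico a b, g (i + 1) = ∑ k ∈ Finset.Ioc a b, g k := by
  have h1 : Finset.Ioc a b = Finset.Ico (a + 1) (b + 1) := by ext k; simp [Finset.mem_Ico, Finset.mem_Ioc]
  rw [h1, Finset.sum_Ico_eq_sum_range, Finset.sum_Ico_eq_sum_range]
  have h2 : b + 1 - (a + 1) = b - a := by omega
  rw [h2]
  exact Finset.sum_congr rfl fun i _ => by rw [show a + i + 1 = a + 1 + i by omega]

private lemma Nf_one (α : ℝ) : Nf α 1 = 1 := by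
  simp [Nf, Real.one_rpow]

private lemma sumN_asymp {α : ℝ} (hα : -1 < α) :
    Tendsto (fun n : ℕ => Nf α n / (n : ℝ) ^ (α + 1)) atTop (𝓝 (α + 1)⁻¹) := by
  have hs : 0 < α + 1 := by linarith
  set s := α + 1 with hs_def
  have hint : ∀ a b : ℕ, (∫ x in (a : ℝ)..(b : ℝ), x ^ α) = ((b : ℝ) ^ s - (a : ℝ) ^ s) / s := by
    intro a b
    rw [integral_rpow (Or.inl hα)]
  -- lower bound
  have hlow : ∀ n : ℕ, 1 ≤ n → ((n : ℝ) ^ s - 1) / s ≤ Nf α n := by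
    intro n hn
    rcases le_or_gt 0 α with h0 | h0
    · -- monotone case : integral from 0 to n
      have hm : MonotoneOn (fun x : ℝ => x ^ α) (Set.Icc ((0 : ℕ) : ℝ) ((n : ℕ) : ℝ)) :=
        fun x hx y _ hxy => Real.rpow_le_rpow (by simpa using hx.1) hxy h0
      have := hm.integral_le_sum_Ico (Nat.zero_le n)
      rw [hint 0 n] at this
      simp only [Nat.cast_zero, Real.zero_rpow hs.ne', sub_zero] at this
      have h2 : ∑ i ∈ Finset.Ico 0 n, ((i + 1 : ℕ) : ℝ) ^ α = Nf α n := by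
        rw [show (Finset.Ico 0 n) = Finset.Ico 0 n from rfl]
        rw [sum_Ico_succ_eq (fun k => (k : ℝ) ^ α) 0 n]; rfl
      rw [h2] at this
      calc ((n : ℝ) ^ s - 1) / s ≤ (n : ℝ) ^ s / s := by
            apply div_le_div_of_nonneg_right ?_ hs.le
            linarith
        _ ≤ Nf α n := this
    · -- antitone case : integral from 1 to n+1
      have ha : AntitoneOn (fun x : ℝ => x ^ α) (Set.Icc ((1 : ℕ) : ℝ) ((n + 1 : ℕ) : ℝ)) := by
        intro x hx y hy hxy
        exact Real.rpow_le_rpow_of_nonpos (by exact_mod_cast lt_of_lt_of_le one_pos (by exact_mod_cast hx.1)) hxy h0.le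
      have := ha.integral_le_sum_Ico (by omega : 1 ≤ n + 1)
      rw [hint 1 (n + 1)] at this
      have h2 : ∑ x ∈ Finset.Ico 1 (n + 1), ((x : ℕ) : ℝ) ^ α = Nf α n := by
        apply Finset.sum_congr _ (fun x _ => rfl)
        ext k; simp [Finset.mem_Ico, Finset.mem_Ioc]; omega
      rw [h2] at this
      push_cast at this
      rw [Real.one_rpow] at this
      refine le_trans (div_le_div_of_nonneg_right ?_ hs.le) this
      have h3 : (n : ℝ) ^ s ≤ ((n : ℝ) + 1) ^ s := by
        apply Real.rpow_le_rpow (Nat.cast_nonneg n) (by linarith) hs.le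
      push_cast
      linarith
  -- upper bound
  have hup : ∀ n : ℕ, 1 ≤ n → Nf α n ≤ (((n : ℝ) + 1) ^ s - 1) / s + 1 := by
    intro n hn
    rcases le_or_gt 0 α with h0 | h0
    · have hm : MonotoneOn (fun x : ℝ => x ^ α) (Set.Icc ((1 : ℕ) : ℝ) ((n + 1 : ℕ) : ℝ)) :=
        fun x hx y hy hxy => Real.rpow_le_rpow (le_trans (by norm_num) hx.1) hxy h0
      have := hm.sum_le_integral_Ico (by omega : 1 ≤ n + 1)
      rw [hint 1 (n + 1)] at this
      have h2 : ∑ x ∈ Finset.Ico 1 (n + 1), ((x : ℕ) : ℝ) ^ α = Nf α n := by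
        apply Finset.sum_congr _ (fun x _ => rfl)
        ext k; simp [Finset.mem_Ico, Finset.mem_Ioc]; omega
      push_cast at this
      rw [Real.one_rpow] at this
      rw [h2] at this
      push_cast at this ⊢
      linarith
    · have ha : AntitoneOn (fun x : ℝ => x ^ α) (Set.Icc ((1 : ℕ) : ℝ) ((n : ℕ) : ℝ)) := by
        intro x hx y hy hxy
        exact Real.rpow_le_rpow_of_nonpos (by exact_mod_cast lt_of_lt_of_le one_pos (by exact_mod_cast hx.1)) hxy h0.le
      have := ha.sum_le_integral_Ico hn
      rw [hint 1 n] at this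
      have h2 : ∑ i ∈ Finset.Ico 1 n, ((i + 1 : ℕ) : ℝ) ^ α = Nf α n - 1 := by
        rw [show (fun i : ℕ => ((i + 1 : ℕ) : ℝ) ^ α) = fun i : ℕ => (fun k : ℕ => (k : ℝ) ^ α) (i + 1) from rfl]
        rw [sum_Ico_succ_eq (fun k => (k : ℝ) ^ α) 1 n]
        have := Nf_diff α hn
        rw [Nf_one] at this
        rw [this]; ring
      rw [h2] at this
      have h3 : (n : ℝ) ^ s ≤ ((n : ℝ) + 1) ^ s :=
        Real.rpow_le_rpow (Nat.cast_nonneg n) (by linarith) hs.le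
      push_cast at this
      rw [Real.one_rpow] at this
      push_cast at this ⊢
      have h4 : ((n : ℝ) ^ s - 1) / s ≤ (((n : ℝ) + 1) ^ s - 1) / s :=
        div_le_div_of_nonneg_right (by linarith) hs.le
      linarith
  -- squeeze
  have hns : Tendsto (fun n : ℕ => (((n : ℝ) ^ s)⁻¹)) atTop (𝓝 0) := by
    apply Tendsto.inv_tendsto_atTop
    exact (tendsto_rpow_atTop hs).comp tendsto_natCast_atTop_atTop
  have hnpos : ∀ᶠ n : ℕ in atTop, (0:ℝ) < (n : ℝ) ^ s := by
    filter_upwards [eventually_ge_atTop 1] with n hn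
    exact Real.rpow_pos_of_pos (by exact_mod_cast hn) s
  have hglim : Tendsto (fun n : ℕ => ((n : ℝ) ^ s - 1) / s / (n : ℝ) ^ s) atTop (𝓝 s⁻¹) := by
    have he : ∀ᶠ n : ℕ in atTop, ((n : ℝ) ^ s - 1) / s / (n : ℝ) ^ s
        = (1 - ((n:ℝ)^s)⁻¹) / s := by
      filter_upwards [hnpos] with n hn
      field_simp
    rw [tendsto_congr' he]
    have := ((tendsto_const_nhds (x := (1:ℝ))).sub hns).div_const s
    simpa using this
  have hhlim : Tendsto (fun n : ℕ => ((((n : ℝ) + 1) ^ s - 1) / s + 1) / (n : ℝ) ^ s)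
      atTop (𝓝 s⁻¹) := by
    have key : ∀ᶠ n : ℕ in atTop, ((((n : ℝ) + 1) ^ s - 1) / s + 1) / (n : ℝ) ^ s
        = (1 + (n:ℝ)⁻¹) ^ s / s + (1 - s⁻¹) * ((n:ℝ)^s)⁻¹ := by
      filter_upwards [eventually_ge_atTop 1] with n hn
      have hn0 : (0:ℝ) < (n:ℝ) := by exact_mod_cast hn
      have h1 : ((n:ℝ)+1) ^ s = (1 + (n:ℝ)⁻¹) ^ s * (n:ℝ) ^ s := by
        rw [← Real.mul_rpow (by positivity) hn0.le]
        congr 1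
        field_simp
      rw [h1]
      have h2 : (0:ℝ) < (n:ℝ) ^ s := Real.rpow_pos_of_pos hn0 s
      field_simp
      ring
    rw [tendsto_congr' key]
    have l1 : Tendsto (fun n : ℕ => (1 + (n:ℝ)⁻¹) ^ s) atTop (𝓝 1) := by
      have l0 : Tendsto (fun n : ℕ => 1 + (n:ℝ)⁻¹) atTop (𝓝 1) := by
        simpa using (tendsto_const_nhds (x := (1:ℝ))).add
          (tendsto_inv_atTop_zero.comp tendsto_natCast_atTop_atTop)
      have hc : ContinuousAt (fun x : ℝ => x ^ s) 1 :=
        Real.continuousAt_rpow_const 1 s (Or.inl one_ne_zero)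
      simpa [Real.one_rpow, Function.comp_def] using hc.tendsto.comp l0
    have := (l1.div_const s).add ((tendsto_const_nhds (x := (1 - s⁻¹))).mul hns)
    simpa using this
  apply tendsto_of_tendsto_of_tendsto_of_le_of_le' hglim hhlim
  · filter_upwards [eventually_ge_atTop 1, hnpos] with n hn hp
    exact div_le_div_of_nonneg_right (hlow n hn) hp.le
  · filter_upwards [eventually_ge_atTop 1, hnpos] with n hn hp
    exact div_le_div_of_nonneg_right (hup n hn) hp.le

private lemma geom_avg {r c : ℝ} (hr : 1 < r) {a : ℕ → ℝ}
    (h : Tendsto (fun i => a i / r ^ i) atTop (𝓝 c)) :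
    Tendsto (fun n => (∑ i ∈ Finset.range n, a i) / r ^ n) atTop (𝓝 (c / (r - 1))) := by
  have hr0 : 0 < r := lt_trans one_pos hr
  have hr1 : r - 1 > 0 := by linarith
  have hrn : ∀ i : ℕ, (0:ℝ) < r ^ i := fun i => pow_pos hr0 i
  have hgsum : ∀ n : ℕ, ∑ i ∈ Finset.range n, r ^ i = (r ^ n - 1) / (r - 1) := by
    intro n; rw [geom_sum_eq hr.ne' n]
  have hgpos : ∀ n : ℕ, 1 ≤ n → (0:ℝ) < ∑ i ∈ Finset.range n, r ^ i := by
    intro n hn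
    apply Finset.sum_pos (fun i _ => hrn i) ⟨0, Finset.mem_range.2 (by omega)⟩
  have htop : Tendsto (fun n : ℕ => ∑ i ∈ Finset.range n, r ^ i) atTop atTop := by
    rw [show (fun n : ℕ => ∑ i ∈ Finset.range n, r ^ i)
        = fun n : ℕ => (r ^ n - 1) / (r - 1) from funext hgsum]
    apply Tendsto.atTop_div_const hr1
    exact tendsto_atTop_add_const_right _ _ (tendsto_pow_atTop_atTop_of_one_lt hr)
  have ho : (fun i => a i - c * r ^ i) =o[atTop] (fun i => r ^ i) := by
    rw [Asymptotics.isLittleO_iff_tendsto (fun i hi => absurd hi (hrn i).ne')]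
    have : (fun i => (a i - c * r ^ i) / r ^ i) = fun i => a i / r ^ i - c := by
      funext i
      field_simp
    rw [this]
    simpa using h.sub_const c
  have hS : (fun n => ∑ i ∈ Finset.range n, (a i - c * r ^ i)) =o[atTop]
      (fun n => ∑ i ∈ Finset.range n, r ^ i) :=
    ho.sum_range (fun i => (hrn i).le) htop
  have h1 : Tendsto (fun n => (∑ i ∈ Finset.range n, (a i - c * r ^ i)) /
      (∑ i ∈ Finset.range n, r ^ i)) atTop (𝓝 0) := hS.tendsto_div_nhds_zero
  have h2 : Tendsto (fun n : ℕ => (∑ i ∈ Finset.range n, r ^ i) / r ^ n) atTop (𝓝 (1 / (r - 1))) := by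
    have he : ∀ n : ℕ, (∑ i ∈ Finset.range n, r ^ i) / r ^ n = (1 - (r ^ n)⁻¹) / (r - 1) * 1 + 0 := by
      intro n
      rw [hgsum n]
      have h0 := (hrn n).ne'
      rw [mul_one, add_zero]
      field_simp
    rw [show (fun n : ℕ => (∑ i ∈ Finset.range n, r ^ i) / r ^ n)
        = fun n : ℕ => (1 - (r ^ n)⁻¹) / (r - 1) * 1 + 0 from funext he]
    have hinv : Tendsto (fun n : ℕ => (r ^ n)⁻¹) atTop (𝓝 0) :=
      Tendsto.inv_tendsto_atTop (tendsto_pow_atTop_atTop_of_one_lt hr)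
    have := (((tendsto_const_nhds (x := (1:ℝ))).sub hinv).div_const (r - 1)).mul_const 1
    have h3 := this.add (tendsto_const_nhds (x := (0:ℝ)))
    convert h3 using 2
    norm_num
  -- combine
  have key : ∀ᶠ n : ℕ in atTop, (∑ i ∈ Finset.range n, a i) / r ^ n
      = ((∑ i ∈ Finset.range n, (a i - c * r ^ i)) / (∑ i ∈ Finset.range n, r ^ i))
          * ((∑ i ∈ Finset.range n, r ^ i) / r ^ n)
        + c * ((∑ i ∈ Finset.range n, r ^ i) / r ^ n) := by
    filter_upwards [eventually_ge_atTop 1] with n hn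
    have hg := hgpos n hn
    have hsplit : ∑ i ∈ Finset.range n, a i
        = (∑ i ∈ Finset.range n, (a i - c * r ^ i)) + c * ∑ i ∈ Finset.range n, r ^ i := by
      rw [Finset.mul_sum, ← Finset.sum_add_distrib]
      exact Finset.sum_congr rfl fun i _ => by ring
    rw [hsplit]
    have h0 := (hrn n).ne'
    have h0' := hg.ne'
    field_simp
  rw [tendsto_congr' key]
  have := (h1.mul h2).add ((tendsto_const_nhds (x := c)).mul h2)
  convert this using 2
  rw [zero_mul, zero_add, mul_one_div]

private lemma Ff_one (α : ℝ) : Ff α 1 = 0 := by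
  rw [Ff]
  have h1 : Finset.Ioc 0 1 = {1} := rfl
  rw [h1, Finset.sum_singleton]
  apply Set.indicator_of_notMem
  rintro ⟨k, hk1, _⟩
  have : 1 ≤ 2 ^ (2 * k) := Nat.one_le_two_pow
  omega

private lemma Ff_block (α : ℝ) (j : ℕ) {n : ℕ} (h1 : 2 ^ (2 * j) ≤ n) (h2 : n ≤ 2 ^ (2 * j + 1)) :
    Ff α n = Ff α (2 ^ (2 * j)) + (Nf α n - Nf α (2 ^ (2 * j))) := by
  rw [Ff_diff α h1, Nf_diff α h1]
  have he : ∑ k ∈ Finset.Ioc (2 ^ (2 * j)) n, Aset.indicator (fun k => (k : ℝ) ^ α) k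
      = ∑ k ∈ Finset.Ioc (2 ^ (2 * j)) n, (k : ℝ) ^ α := by
    refine Finset.sum_congr rfl fun k hk => ?_
    rw [Finset.mem_Ioc] at hk
    exact ind_block α hk.1 (le_trans hk.2 h2)
  rw [he]; ring

private lemma Ff_gap (α : ℝ) (j : ℕ) {n : ℕ} (h1 : 2 ^ (2 * j + 1) ≤ n) (h2 : n ≤ 2 ^ (2 * j + 2)) :
    Ff α n = Ff α (2 ^ (2 * j + 1)) := by
  rw [Ff_diff α h1]
  have he : ∑ k ∈ Finset.Ioc (2 ^ (2 * j + 1)) n, Aset.indicator (fun k => (k : ℝ) ^ α) k = 0 := by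
    refine Finset.sum_eq_zero fun k hk => ?_
    rw [Finset.mem_Ioc] at hk
    exact ind_gap α hk.1 (le_trans hk.2 h2)
  rw [he]; ring

private lemma FfT (α : ℝ) (j : ℕ) :
    Ff α (2 ^ (2 * j + 1))
      = ∑ i ∈ Finset.range (j + 1), (Nf α (2 ^ (2 * i + 1)) - Nf α (2 ^ (2 * i))) := by
  induction j with
  | zero =>
    rw [Finset.sum_range_one]
    have h := Ff_block α 0 (Nat.pow_le_pow_right (by norm_num) (by omega))
      (le_refl (2 ^ (2 * 0 + 1)))
    rw [h]
    norm_num [Ff_one]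
  | succ j ih =>
    have e1 : 2 * (j + 1) = 2 * j + 2 := by ring
    have h := Ff_block α (j + 1) (Nat.pow_le_pow_right (by norm_num) (by omega))
      (le_refl (2 ^ (2 * (j + 1) + 1)))
    rw [h]
    have hgap := Ff_gap α j (Nat.pow_le_pow_right (by norm_num) (by omega))
      (le_refl (2 ^ (2 * j + 2)))
    rw [e1] at *
    rw [hgap, ih, Finset.sum_range_succ (n := j + 1),
      show 2 * (j + 1) = 2 * j + 2 from by ring]

private lemma rpow_pow (s : ℝ) (m : ℕ) : ((2:ℝ) ^ m) ^ s = ((2:ℝ) ^ s) ^ m := by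
  rw [← Real.rpow_natCast 2 m, ← Real.rpow_mul (by norm_num), mul_comm,
    Real.rpow_mul (by norm_num), Real.rpow_natCast]

private lemma div_quot (aa bb dd : ℝ) (hd : dd ≠ 0) : aa / dd / (bb / dd) = aa / bb := by
  rcases eq_or_ne bb 0 with h | h
  · simp [h]
  · field_simp

private lemma tendsto_pow2 (e : ℕ) : Tendsto (fun j : ℕ => 2 ^ (2 * j + e)) atTop atTop := by
  apply tendsto_atTop_mono (fun j => ?_) tendsto_id
  simp only [id_eq]
  have h1 := Nat.lt_two_pow_self (n := j)
  have h2 : (2:ℕ) ^ j ≤ 2 ^ (2 * j + e) := Nat.pow_le_pow_right (by norm_num) (by omega)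
  omega

private lemma corner_limits {α : ℝ} (hα : -1 < α) :
    Tendsto (fun j : ℕ => Ff α (2 ^ (2 * j + 1)) / Nf α (2 ^ (2 * (j + 1)))) atTop
      (𝓝 (1 / ((2:ℝ) ^ (α + 1) + 1))) ∧
    Tendsto (fun j : ℕ => Ff α (2 ^ (2 * j + 1)) / Nf α (2 ^ (2 * j + 1))) atTop
      (𝓝 ((2:ℝ) ^ (α + 1) / ((2:ℝ) ^ (α + 1) + 1))) := by
  have hs : 0 < α + 1 := by linarith
  set s : ℝ := α + 1 with hsdef
  set x : ℝ := (2:ℝ) ^ s with hxdef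
  have hx0 : 0 < x := Real.rpow_pos_of_pos (by norm_num) s
  have hx1 : 1 < x := by
    have := Real.rpow_lt_rpow_of_exponent_lt (by norm_num : (1:ℝ) < 2) hs
    rwa [Real.rpow_zero] at this
  have hr : 1 < x ^ 2 := by nlinarith
  have hrpos : ∀ j : ℕ, (0:ℝ) < (x ^ 2) ^ j := fun j => pow_pos (by positivity) j
  -- cast facts
  have hcast : ∀ m : ℕ, (((2:ℕ) ^ m : ℕ) : ℝ) ^ s = x ^ m := by
    intro m
    push_cast
    rw [rpow_pow]
  have hceven : ∀ j : ℕ, (((2:ℕ) ^ (2 * j) : ℕ) : ℝ) ^ s = (x ^ 2) ^ j := by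
    intro j; rw [hcast, pow_mul]
  have hcodd : ∀ j : ℕ, (((2:ℕ) ^ (2 * j + 1) : ℕ) : ℝ) ^ s = x * (x ^ 2) ^ j := by
    intro j; rw [hcast, pow_succ, pow_mul]; ring
  have hceven' : ∀ j : ℕ, (((2:ℕ) ^ (2 * (j + 1)) : ℕ) : ℝ) ^ s = (x ^ 2) ^ (j + 1) := by
    intro j; rw [hcast, pow_mul]
  -- subsequence limits of Nf
  have comp : ∀ τ : ℕ → ℕ, Tendsto τ atTop atTop →
      Tendsto (fun j => Nf α (τ j) / ((τ j : ℕ) : ℝ) ^ s) atTop (𝓝 s⁻¹) :=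
    fun τ hτ => (sumN_asymp hα).comp hτ
  have limNp : Tendsto (fun j : ℕ => Nf α (2 ^ (2 * j)) / (x ^ 2) ^ j) atTop (𝓝 s⁻¹) := by
    have := comp (fun j => 2 ^ (2 * j)) (by simpa using tendsto_pow2 0)
    refine this.congr fun j => ?_
    rw [hceven j]
  have limNp' : Tendsto (fun j : ℕ => Nf α (2 ^ (2 * (j + 1))) / (x ^ 2) ^ (j + 1)) atTop
      (𝓝 s⁻¹) := by
    have := comp (fun j => 2 ^ (2 * (j + 1)))
      ((tendsto_pow2 2).congr (fun j => by rw [show 2 * (j + 1) = 2 * j + 2 from by ring]))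
    refine this.congr fun j => ?_
    rw [hceven' j]
  have limNq : Tendsto (fun j : ℕ => Nf α (2 ^ (2 * j + 1)) / (x ^ 2) ^ j) atTop (𝓝 (x / s)) := by
    have h0 := comp (fun j => 2 ^ (2 * j + 1)) (tendsto_pow2 1)
    have h1 := h0.mul_const x
    rw [inv_mul_eq_div] at h1
    refine h1.congr fun j => ?_
    rw [hcodd j]
    field_simp
  -- the numerator limit
  have limA : Tendsto (fun i : ℕ => (Nf α (2 ^ (2 * i + 1)) - Nf α (2 ^ (2 * i))) / (x ^ 2) ^ i)
      atTop (𝓝 (x / s - s⁻¹)) := by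
    have := limNq.sub limNp
    refine this.congr fun i => ?_
    rw [sub_div]
  have limT : Tendsto (fun j : ℕ => Ff α (2 ^ (2 * j + 1)) / (x ^ 2) ^ (j + 1)) atTop
      (𝓝 ((x / s - s⁻¹) / (x ^ 2 - 1))) := by
    have hG := geom_avg hr limA
    have := hG.comp (tendsto_add_atTop_nat 1)
    refine this.congr fun j => ?_
    simp only [Function.comp]
    rw [← FfT α j]
  have limT' : Tendsto (fun j : ℕ => Ff α (2 ^ (2 * j + 1)) / (x ^ 2) ^ j) atTop
      (𝓝 ((x / s - s⁻¹) / (x ^ 2 - 1) * x ^ 2)) := by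
    have := limT.mul_const (x ^ 2)
    refine this.congr fun j => ?_
    have h2 := (hrpos j).ne'
    rw [pow_succ]
    field_simp
    ring
  have hx1' : x - 1 ≠ 0 := by linarith
  have hxp1 : x + 1 ≠ 0 := by linarith
  have hsne : s ≠ 0 := hs.ne'
  constructor
  · have hdiv := limT.div limNp' (by positivity)
    have heq : (x / s - s⁻¹) / (x ^ 2 - 1) / s⁻¹ = 1 / (x + 1) := by
      have : x ^ 2 - 1 = (x - 1) * (x + 1) := by ring
      rw [this]
      field_simp
    rw [heq] at hdiv
    refine hdiv.congr fun j => ?_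
    exact div_quot _ _ _ (hrpos (j + 1)).ne'
  · have hdiv := limT'.div limNq (by positivity)
    have heq : (x / s - s⁻¹) / (x ^ 2 - 1) * x ^ 2 / (x / s) = x / (x + 1) := by
      have : x ^ 2 - 1 = (x - 1) * (x + 1) := by ring
      rw [this]
      field_simp
    rw [heq] at hdiv
    refine hdiv.congr fun j => ?_
    exact div_quot _ _ _ (hrpos j).ne'

private lemma Nf_nonneg (α : ℝ) (n : ℕ) : 0 ≤ Nf α n :=
  Finset.sum_nonneg fun k _ => Real.rpow_nonneg (Nat.cast_nonneg k) α

private lemma Nf_le (α : ℝ) {a b : ℕ} (h : a ≤ b) : Nf α a ≤ Nf α b := by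
  rw [Nf_diff α h]
  have : (0:ℝ) ≤ ∑ k ∈ Finset.Ioc a b, (k : ℝ) ^ α :=
    Finset.sum_nonneg fun k _ => Real.rpow_nonneg (Nat.cast_nonneg k) α
  linarith

private lemma ineq_low (α : ℝ) (j : ℕ) {n : ℕ} (h1 : 2 ^ (2 * j + 1) < n)
    (h2 : n ≤ 2 ^ (2 * (j + 1) + 1)) :
    Ff α (2 ^ (2 * j + 1)) / Nf α (2 ^ (2 * (j + 1))) ≤ Ff α n / Nf α n := by
  have e1 : 2 * (j + 1) = 2 * j + 2 := by ring
  have hQP : (2:ℕ) ^ (2 * j + 1) < 2 ^ (2 * (j + 1)) := by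
    rw [e1]; exact Nat.pow_lt_pow_right (by norm_num) (by omega)
  have hn1 : 1 ≤ n := by
    have : (1:ℕ) ≤ 2 ^ (2 * j + 1) := Nat.one_le_two_pow
    omega
  have hP1 : 1 ≤ (2:ℕ) ^ (2 * (j + 1)) := Nat.one_le_two_pow
  rcases le_or_gt n (2 ^ (2 * (j + 1))) with hc | hc
  · -- n in the gap
    have hFn : Ff α n = Ff α (2 ^ (2 * j + 1)) := by
      apply Ff_gap α j h1.le
      rw [← e1] at *
      exact hc
    rw [hFn]
    exact div_le_div_of_nonneg_left (Ff_nonneg α _) (Nf_pos α hn1) (Nf_le α hc)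
  · -- n in the next block
    have hFP : Ff α (2 ^ (2 * (j + 1))) = Ff α (2 ^ (2 * j + 1)) := by
      rw [e1]
      exact Ff_gap α j (Nat.pow_le_pow_right (by norm_num) (by omega)) (le_refl _)
    have hFn : Ff α n = Ff α (2 ^ (2 * (j + 1)))
        + (Nf α n - Nf α (2 ^ (2 * (j + 1)))) := Ff_block α (j + 1) hc.le h2
    have hD : 0 ≤ Nf α n - Nf α (2 ^ (2 * (j + 1))) := by
      have := Nf_le α hc.le
      linarith
    have hN0 : 0 < Nf α (2 ^ (2 * (j + 1))) := Nf_pos α hP1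
    have hFle : Ff α (2 ^ (2 * j + 1)) ≤ Nf α (2 ^ (2 * (j + 1))) := by
      rw [← hFP]; exact Ff_le_Nf α _
    have hF0 : 0 ≤ Ff α (2 ^ (2 * j + 1)) := Ff_nonneg α _
    have hNn : Nf α (2 ^ (2 * (j + 1))) ≤ Nf α n := Nf_le α hc.le
    rw [hFn, hFP, div_le_div_iff₀ hN0 (by linarith)]
    nlinarith
  
private lemma ineq_high (α : ℝ) (j : ℕ) {n : ℕ} (h1 : 2 ^ (2 * j) < n)
    (h2 : n ≤ 2 ^ (2 * (j + 1))) :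
    Ff α n / Nf α n ≤ Ff α (2 ^ (2 * j + 1)) / Nf α (2 ^ (2 * j + 1)) := by
  have e1 : 2 * (j + 1) = 2 * j + 2 := by ring
  have hn1 : 1 ≤ n := by
    have : (1:ℕ) ≤ 2 ^ (2 * j) := Nat.one_le_two_pow
    omega
  have hQ1 : 1 ≤ (2:ℕ) ^ (2 * j + 1) := Nat.one_le_two_pow
  rcases le_or_gt n (2 ^ (2 * j + 1)) with hc | hc
  · -- n in the block
    have hFn : Ff α n = Ff α (2 ^ (2 * j)) + (Nf α n - Nf α (2 ^ (2 * j))) :=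
      Ff_block α j h1.le hc
    have hFQ : Ff α (2 ^ (2 * j + 1)) = Ff α (2 ^ (2 * j))
        + (Nf α (2 ^ (2 * j + 1)) - Nf α (2 ^ (2 * j))) :=
      Ff_block α j (Nat.pow_le_pow_right (by norm_num) (by omega)) (le_refl _)
    have hE : 0 ≤ Nf α (2 ^ (2 * j + 1)) - Nf α n := by
      have := Nf_le α hc
      linarith
    have hNn : 0 < Nf α n := Nf_pos α hn1
    have hFle : Ff α n ≤ Nf α n := Ff_le_Nf α n
    have hF0 : 0 ≤ Ff α n := Ff_nonneg α n
    have hkey : Ff α (2 ^ (2 * j + 1)) = Ff α n + (Nf α (2 ^ (2 * j + 1)) - Nf α n) := by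
      rw [hFn, hFQ]; ring
    rw [hkey, div_le_div_iff₀ hNn (by linarith)]
    nlinarith
  · -- n in the gap
    have hFn : Ff α n = Ff α (2 ^ (2 * j + 1)) := by
      apply Ff_gap α j hc.le
      rw [show (2:ℕ) ^ (2 * j + 2) = 2 ^ (2 * (j + 1)) from by rw [e1]]
      exact h2
    rw [hFn]
    exact div_le_div_of_nonneg_left (Ff_nonneg α _) (Nf_pos α hQ1) (Nf_le α hc.le)

private lemma find_low (j0 : ℕ) {n : ℕ} (hn : 2 ^ (2 * j0 + 1) < n) :
    ∃ j, j0 ≤ j ∧ 2 ^ (2 * j + 1) < n ∧ n ≤ 2 ^ (2 * (j + 1) + 1) := by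
  have h4 : ∀ t : ℕ, (2:ℕ) ^ (2 * t + 1) = 2 * 4 ^ t := by
    intro t; rw [pow_succ, pow_mul]; ring
  have hn3 : 3 ≤ n := by
    have h2 : (2:ℕ) ^ 1 ≤ 2 ^ (2 * j0 + 1) := Nat.pow_le_pow_right (by norm_num) (by omega)
    simp at h2; omega
  set m := (n - 1) / 2 with hm
  have hm1 : 1 ≤ m := by omega
  refine ⟨Nat.log 4 m, ?_, ?_, ?_⟩
  · rw [Nat.le_log_iff_pow_le (by norm_num) (by omega)]
    have e0 := h4 j0
    omega
  · have hlog : 4 ^ Nat.log 4 m ≤ m := Nat.pow_log_le_self 4 (by omega)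
    rw [h4]
    omega
  · have hlt : m < 4 ^ (Nat.log 4 m + 1) := Nat.lt_pow_succ_log_self (by norm_num) m
    rw [h4]
    omega

private lemma find_high (j0 : ℕ) {n : ℕ} (hn : 2 ^ (2 * j0) < n) :
    ∃ j, j0 ≤ j ∧ 2 ^ (2 * j) < n ∧ n ≤ 2 ^ (2 * (j + 1)) := by
  have h4 : ∀ t : ℕ, (2:ℕ) ^ (2 * t) = 4 ^ t := by
    intro t; rw [pow_mul]; norm_num
  have hn2 : 2 ≤ n := by
    have h2 : (1:ℕ) ≤ 2 ^ (2 * j0) := Nat.one_le_two_pow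
    omega
  refine ⟨Nat.log 4 (n - 1), ?_, ?_, ?_⟩
  · rw [Nat.le_log_iff_pow_le (by norm_num) (by omega)]
    have e0 := h4 j0
    omega
  · have hlog : 4 ^ Nat.log 4 (n - 1) ≤ n - 1 := Nat.pow_log_le_self 4 (by omega)
    rw [h4]
    omega
  · have hlt : n - 1 < 4 ^ (Nat.log 4 (n - 1) + 1) := Nat.lt_pow_succ_log_self (by norm_num) _
    rw [h4]
    omega

theorem stmt_7 (α : ℝ) (hα : -1 < α) :
    let A : Set ℕ := {m | ∃ k : ℕ, 2 ^ (2 * k) < m ∧ m ≤ 2 ^ (2 * k + 1)}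
    Filter.liminf
        (fun n : ℕ =>
          (∑ k ∈ Finset.Icc 1 n, A.indicator (fun k => (k : ℝ) ^ α) k) /
            ∑ k ∈ Finset.Icc 1 n, (k : ℝ) ^ α)
        Filter.atTop = 1 / ((2 : ℝ) ^ (α + 1) + 1) ∧
    Filter.limsup
        (fun n : ℕ =>
          (∑ k ∈ Finset.Icc 1 n, A.indicator (fun k => (k : ℝ) ^ α) k) /
            ∑ k ∈ Finset.Icc 1 n, (k : ℝ) ^ α)
        Filter.atTop = (2 : ℝ) ^ (α + 1) / ((2 : ℝ) ^ (α + 1) + 1) := by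
  intro A
  have hfun : (fun n : ℕ =>
      (∑ k ∈ Finset.Icc 1 n, A.indicator (fun k => (k : ℝ) ^ α) k) /
        ∑ k ∈ Finset.Icc 1 n, (k : ℝ) ^ α) = fun n => Ff α n / Nf α n := by
    funext n
    rw [icc_eq_ioc]
    rfl
  rw [hfun]
  obtain ⟨hu, hv⟩ := corner_limits hα
  have hR0 : ∀ n, 0 ≤ Ff α n / Nf α n :=
    fun n => div_nonneg (Ff_nonneg α n) (Nf_nonneg α n)
  have hR1 : ∀ n, Ff α n / Nf α n ≤ 1 :=
    fun n => div_le_one_of_le₀ (Ff_le_Nf α n) (Nf_nonneg α n)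
  have hbdd_ge : atTop.IsBoundedUnder (· ≥ ·) (fun n => Ff α n / Nf α n) :=
    isBoundedUnder_of ⟨0, fun n => hR0 n⟩
  have hbdd_le : atTop.IsBoundedUnder (· ≤ ·) (fun n => Ff α n / Nf α n) :=
    isBoundedUnder_of ⟨1, fun n => hR1 n⟩
  have hcob_ge : atTop.IsCoboundedUnder (· ≥ ·) (fun n => Ff α n / Nf α n) :=
    hbdd_le.isCoboundedUnder_ge
  have hcob_le : atTop.IsCoboundedUnder (· ≤ ·) (fun n => Ff α n / Nf α n) :=
    hbdd_ge.isCoboundedUnder_le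
  have hRp : ∀ j : ℕ, Ff α (2 ^ (2 * (j + 1))) / Nf α (2 ^ (2 * (j + 1)))
      = Ff α (2 ^ (2 * j + 1)) / Nf α (2 ^ (2 * (j + 1))) := by
    intro j
    congr 1
    rw [show 2 * (j + 1) = 2 * j + 2 from by ring]
    exact Ff_gap α j (Nat.pow_le_pow_right (by norm_num) (by omega)) (le_refl _)
  have hgrow : ∀ a e : ℕ, a ≤ 2 ^ (2 * a + e) := by
    intro a e
    have h1 := Nat.lt_two_pow_self (n := a)
    have h2 : (2:ℕ) ^ a ≤ 2 ^ (2 * a + e) := Nat.pow_le_pow_right (by norm_num) (by omega)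
    omega
  constructor
  · apply le_antisymm
    · apply le_of_forall_gt_imp_ge_of_dense
      intro b hb
      have hev := hu.eventually (gt_mem_nhds hb)
      obtain ⟨j0, hj0⟩ := eventually_atTop.1 hev
      apply liminf_le_of_frequently_le _ hbdd_ge
      rw [frequently_atTop]
      intro a
      refine ⟨2 ^ (2 * (max j0 a + 1)), ?_, ?_⟩
      · have := hgrow (max j0 a + 1) 0
        have h2 : a ≤ max j0 a + 1 := by omega
        simp only [add_zero] at this
        omega
      · rw [hRp (max j0 a)]
        exact (hj0 (max j0 a) (le_max_left _ _)).le
    · apply le_of_forall_lt_imp_le_of_dense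
      intro b hb
      have hev := hu.eventually (lt_mem_nhds hb)
      obtain ⟨j0, hj0⟩ := eventually_atTop.1 hev
      apply le_liminf_of_le hcob_ge
      rw [eventually_atTop]
      refine ⟨2 ^ (2 * j0 + 1) + 1, fun n hn => ?_⟩
      obtain ⟨j, hjj0, hlt, hle⟩ := find_low j0 (n := n) (by omega)
      exact le_trans (hj0 j hjj0).le (ineq_low α j hlt hle)
  · apply le_antisymm
    · apply le_of_forall_gt_imp_ge_of_dense
      intro b hb
      have hev := hv.eventually (gt_mem_nhds hb)
      obtain ⟨j0, hj0⟩ := eventually_atTop.1 hev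
      apply limsup_le_of_le hcob_le
      rw [eventually_atTop]
      refine ⟨2 ^ (2 * j0) + 1, fun n hn => ?_⟩
      obtain ⟨j, hjj0, hlt, hle⟩ := find_high j0 (n := n) (by omega)
      exact le_trans (ineq_high α j hlt hle) (hj0 j hjj0).le
    · apply le_of_forall_lt_imp_le_of_dense
      intro b hb
      have hev := hv.eventually (lt_mem_nhds hb)
      obtain ⟨j0, hj0⟩ := eventually_atTop.1 hev
      apply le_limsup_of_frequently_le _ hbdd_le
      rw [frequently_atTop]
      intro a
      refine ⟨2 ^ (2 * max j0 a + 1), ?_, ?_⟩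
      · have := hgrow (max j0 a) 1
        have h2 : a ≤ max j0 a := le_max_right _ _
        omega
      · exact (hj0 (max j0 a) (le_max_left _ _)).le
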